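/- Let s ≥ 1 and let m₁ > 0, n₁ > 0, M, N be real with 0 < N < 1, M > (N + 1 + s)/2, 1 < n₂ < m₂, and m₂^{1−N} > (m₁ n₁ + M m₁² n₁ + n₁²)/m₁². Define n(x) = n₁ (x + n₂)^N and m(x) = m₁ (x + m₂)^M, so that n'(x) = n₁ N (x + n₂)^{N−1} and m'(x) = m₁ M (x + m₂)^{M−1}. Then for all x ≥ 0, (1 + n'(x)) m(x)² − (1 + m'(x)) m(x) n(x) − (x+1)^s n(x)² > 0. -/

import Mathlib

/-- Lemma 4.1 of the paper: with `n(x) = n₁(x+n₂)^N` and `m(x) = m₁(x+m₂)^M`,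
the invariance inequality
`(1 + n'(x)) m(x)² − (1 + m'(x)) m(x) n(x) − (x+1)^s n(x)² > 0` holds for all `x ≥ 0`. -/
theorem invariance_inequality_poly
    (s m₁ m₂ n₁ n₂ M N : ℝ)
    (hs : 1 ≤ s)
    (hm₁ : 0 < m₁) (hn₁ : 0 < n₁)
    (hN0 : 0 < N) (hN1 : N < 1)
    (hM : M > (N + 1 + s) / 2)
    (hn₂ : 1 < n₂) (hn₂m₂ : n₂ < m₂)
    (hcond : m₂ ^ (1 - N) > (m₁ * n₁ + M * m₁ ^ 2 * n₁ + n₁ ^ 2) / m₁ ^ 2) :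
    ∀ x : ℝ, 0 ≤ x →
      (1 + n₁ * N * (x + n₂) ^ (N - 1)) * (m₁ * (x + m₂) ^ M) ^ 2
        - (1 + m₁ * M * (x + m₂) ^ (M - 1)) * (m₁ * (x + m₂) ^ M) * (n₁ * (x + n₂) ^ N)
        - (x + 1) ^ s * (n₁ * (x + n₂) ^ N) ^ 2 > 0 := by
  intro x hx
  set p := x + m₂ with hp_def
  set q := x + n₂ with hq_def
  set r := x + 1 with hr_def
  have hm₂1 : 1 < m₂ := hn₂.trans hn₂m₂
  have hp1 : 1 < p := by simp only [hp_def]; linarith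
  have hq1 : 1 < q := by simp only [hq_def]; linarith
  have hr0 : 0 < r := by simp only [hr_def]; linarith
  have hrq : r ≤ q := by simp only [hr_def, hq_def]; linarith
  have hqp : q ≤ p := by simp only [hq_def, hp_def]; linarith
  have hM1 : 1 < M := by linarith
  have hs0 : 0 < s := by linarith
  have hp0 : 0 < p := one_pos.trans hp1
  have hq0 : 0 < q := one_pos.trans hq1
  set E := 2 * M - 1 + N with hE
  have hpM : 0 < p ^ M := Real.rpow_pos_of_pos hp0 M
  have hqN : 0 < q ^ N := Real.rpow_pos_of_pos hq0 N
  have hpE : 0 < p ^ E := Real.rpow_pos_of_pos hp0 E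
  have hqNpN : q ^ N ≤ p ^ N := Real.rpow_le_rpow hq0.le hqp hN0.le
  have hpN : 0 < p ^ N := Real.rpow_pos_of_pos hp0 N
  have h1 : p ^ M * q ^ N ≤ p ^ E := by
    calc p ^ M * q ^ N ≤ p ^ M * p ^ N :=
          mul_le_mul_of_nonneg_left hqNpN hpM.le
      _ = p ^ (M + N) := (Real.rpow_add hp0 M N).symm
      _ ≤ p ^ E := Real.rpow_le_rpow_of_exponent_le hp1.le (by rw [hE]; linarith)
  have h2 : p ^ (M - 1) * p ^ M * q ^ N ≤ p ^ E := by
    have hmm : p ^ (M - 1) * p ^ M = p ^ (2 * M - 1) := by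
      rw [← Real.rpow_add hp0]; ring_nf
    rw [hmm]
    calc p ^ (2 * M - 1) * q ^ N ≤ p ^ (2 * M - 1) * p ^ N :=
          mul_le_mul_of_nonneg_left hqNpN (Real.rpow_pos_of_pos hp0 _).le
      _ = p ^ (2 * M - 1 + N) := (Real.rpow_add hp0 _ _).symm
      _ = p ^ E := by rw [hE]
  have h3 : r ^ s * (q ^ N * q ^ N) ≤ p ^ E := by
    have hrs : r ^ s ≤ p ^ s := Real.rpow_le_rpow hr0.le (hrq.trans hqp) hs0.le
    have hrs0 : 0 ≤ r ^ s := (Real.rpow_pos_of_pos hr0 s).le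
    calc r ^ s * (q ^ N * q ^ N) ≤ p ^ s * (p ^ N * p ^ N) := by
          apply mul_le_mul hrs _ (by positivity) (by positivity)
          exact mul_le_mul hqNpN hqNpN hqN.le hpN.le
      _ = p ^ (s + N + N) := by
          rw [Real.rpow_add hp0 (s + N), Real.rpow_add hp0 s, mul_assoc]
      _ ≤ p ^ E := Real.rpow_le_rpow_of_exponent_le hp1.le (by rw [hE]; linarith)
  have h4 : 0 ≤ n₁ * N * q ^ (N - 1) := by positivity
  have h6 : p ^ M * p ^ M = p ^ E * p ^ (1 - N) := by
    rw [← Real.rpow_add hp0, ← Real.rpow_add hp0, hE]; ring_nf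
  have h5 : m₁ ^ 2 * (p ^ E * p ^ (1 - N)) >
      (m₁ * n₁ + M * m₁ ^ 2 * n₁ + n₁ ^ 2) * p ^ E := by
    have hm₂p : m₂ ^ (1 - N) ≤ p ^ (1 - N) :=
      Real.rpow_le_rpow (by linarith) (by simp only [hp_def]; linarith) (by linarith)
    have hC : m₁ * n₁ + M * m₁ ^ 2 * n₁ + n₁ ^ 2 < m₁ ^ 2 * p ^ (1 - N) := by
      rw [gt_iff_lt, div_lt_iff₀ (by positivity)] at hcond
      have h2' : m₂ ^ (1 - N) * m₁ ^ 2 ≤ p ^ (1 - N) * m₁ ^ 2 :=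
        mul_le_mul_of_nonneg_right hm₂p (sq_nonneg m₁)
      have e1 : p ^ (1 - N) * m₁ ^ 2 = m₁ ^ 2 * p ^ (1 - N) := by ring
      linarith
    have h := mul_lt_mul_of_pos_right hC hpE
    have e2 : m₁ ^ 2 * p ^ (1 - N) * p ^ E = m₁ ^ 2 * (p ^ E * p ^ (1 - N)) := by ring
    linarith
  have t1 : m₁ * n₁ * (p ^ M * q ^ N) ≤ m₁ * n₁ * p ^ E :=
    mul_le_mul_of_nonneg_left h1 (by positivity)
  have t2 : M * m₁ ^ 2 * n₁ * (p ^ (M - 1) * p ^ M * q ^ N) ≤ M * m₁ ^ 2 * n₁ * p ^ E :=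
    mul_le_mul_of_nonneg_left h2 (by positivity)
  have t3 : n₁ ^ 2 * (r ^ s * (q ^ N * q ^ N)) ≤ n₁ ^ 2 * p ^ E :=
    mul_le_mul_of_nonneg_left h3 (by positivity)
  have t4 : 0 ≤ n₁ * N * q ^ (N - 1) * (m₁ * p ^ M) ^ 2 :=
    mul_nonneg h4 (sq_nonneg _)
  have expand : (1 + n₁ * N * q ^ (N - 1)) * (m₁ * p ^ M) ^ 2
      - (1 + m₁ * M * p ^ (M - 1)) * (m₁ * p ^ M) * (n₁ * q ^ N)
      - r ^ s * (n₁ * q ^ N) ^ 2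
      = m₁ ^ 2 * (p ^ M * p ^ M) + n₁ * N * q ^ (N - 1) * (m₁ * p ^ M) ^ 2
        - m₁ * n₁ * (p ^ M * q ^ N)
        - M * m₁ ^ 2 * n₁ * (p ^ (M - 1) * p ^ M * q ^ N)
        - n₁ ^ 2 * (r ^ s * (q ^ N * q ^ N)) := by ring
  rw [expand, h6]
  linarith [t1, t2, t3, t4, h5]
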